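/- Star-equation: If H = (V, E) is a k-uniform 2-hypertree on n vertices, C_i denotes the number of maximal stars with exactly i edges in the star-decomposition of H, and l denotes the number of (k-1)-subsets of V not covered by any edge of H, then |E| = (1/(k-1))·C(n, k-1) − (1/(k-1))·Σ_{i=1}^{n-k+1} C_i − l/(k-1). -/

import Mathlib

variable {V : Type*} [DecidableEq V]

/-- The list of consecutive `k`-windows (as finsets) of a vertex sequence. -/
def windows (k : ℕ) (w : List V) : List (Finset V) :=
  (List.range (w.length + 1 - k)).map fun i => ((w.drop i).take k).toFinset

/-- `w` is the vertex sequence of a chain: `v₁ ≠ v_l`, each window is a `k`-set,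
and the `l - k + 1` window edges are pairwise distinct. -/
def IsChainSeq (k : ℕ) (w : List V) : Prop :=
  k ≤ w.length ∧ w.head? ≠ w.getLast? ∧
  (∀ e ∈ windows k w, e.card = k) ∧ (windows k w).Nodup

/-- `w` is the vertex sequence of a semicycle: `v₁ = v_l`, each window is a `k`-set,
and the `l - k + 1` window edges are pairwise distinct. -/
def IsSemicycleSeq (k : ℕ) (w : List V) : Prop :=
  k ≤ w.length ∧ w.head? = w.getLast? ∧
  (∀ e ∈ windows k w, e.card = k) ∧ (windows k w).Nodup

/-- A hypergraph with edge set `E` contains no semicycle as a subhypergraph. -/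
def SemicycleFree (k : ℕ) (E : Finset (Finset V)) : Prop :=
  ¬ ∃ w : List V, IsSemicycleSeq k w ∧ ∀ e ∈ windows k w, e ∈ E

/-- Every two distinct vertices of `S` lie in a common chain subhypergraph of `E`. -/
def ChainConnOn (k : ℕ) (S : Finset V) (E : Finset (Finset V)) : Prop :=
  ∀ u ∈ S, ∀ v ∈ S, u ≠ v →
    ∃ w : List V, IsChainSeq k w ∧ (∀ e ∈ windows k w, e ∈ E) ∧ u ∈ w ∧ v ∈ w

/-- Chain-connectedness on the whole (finite) vertex type. -/
def ChainConn [Fintype V] (k : ℕ) (E : Finset (Finset V)) : Prop :=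
  ChainConnOn k Finset.univ E

/-- A `k`-uniform hypertree: chain-connected and semicycle-free. -/
def IsHypertree [Fintype V] (k : ℕ) (E : Finset (Finset V)) : Prop :=
  (∀ e ∈ E, e.card = k) ∧ ChainConn k E ∧ SemicycleFree k E

/-- Every chain subhypergraph of `E` has length (number of edges) at most `l`. -/
def ChainsLenLE (k l : ℕ) (E : Finset (Finset V)) : Prop :=
  ∀ w : List V, IsChainSeq k w → (∀ e ∈ windows k w, e ∈ E) →
    w.length + 1 - k ≤ l

/-- An `l`-hypertree: a hypertree all of whose chains have length at most `l`. -/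
def IsLHypertree [Fintype V] (k l : ℕ) (E : Finset (Finset V)) : Prop :=
  IsHypertree k E ∧ ChainsLenLE k l E

/-- Edge-minimal: deleting any edge destroys chain-connectedness. -/
def EdgeMinimal [Fintype V] (k : ℕ) (E : Finset (Finset V)) : Prop :=
  ∀ e ∈ E, ¬ ChainConn k (E.erase e)

/-- Edge-maximal: adding any new `k`-set as an edge creates a semicycle. -/
def EdgeMaximal [Fintype V] (k : ℕ) (E : Finset (Finset V)) : Prop :=
  ∀ s : Finset V, s.card = k → s ∉ E → ¬ SemicycleFree k (insert s E)

/-- `S` is a (tight) star subhypergraph of `E`: a nonempty set of edges of `E`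
all containing a common `(k-1)`-set kernel. -/
def IsStarSub (k : ℕ) (E S : Finset (Finset V)) : Prop :=
  S ⊆ E ∧ S.Nonempty ∧ ∃ K : Finset V, K.card = k - 1 ∧ ∀ e ∈ S, K ⊆ e

/-- `S` is a maximal star subhypergraph of `E`. -/
def IsMaxStar (k : ℕ) (E S : Finset (Finset V)) : Prop :=
  IsStarSub k E S ∧ ∀ T, IsStarSub k E T → S ⊆ T → S = T

lemma windows_explicit (m : ℕ) (a y x b : V) (Cl : List V) (hC : Cl.length = m) :
    windows (m + 2) (a :: y :: (Cl ++ [x, b])) =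
      [(a :: y :: Cl).toFinset, (y :: (Cl ++ [x])).toFinset, (Cl ++ [x, b]).toFinset] := by
  have hCx : (Cl ++ [x]).length = m + 1 := by simp [hC]
  have t0 : List.take (m + 2) (a :: y :: (Cl ++ [x, b])) = a :: y :: Cl := by
    rw [show m + 2 = (m + 1) + 1 from rfl, List.take_succ_cons, List.take_succ_cons,
      List.take_left' hC]
  have t1 : List.take (m + 2) (y :: (Cl ++ [x, b])) = y :: (Cl ++ [x]) := by
    rw [show m + 2 = (m + 1) + 1 from rfl, List.take_succ_cons]
    have : Cl ++ [x, b] = (Cl ++ [x]) ++ [b] := by simp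
    rw [this, List.take_left' hCx]
  have t2 : List.take (m + 2) (Cl ++ [x, b]) = Cl ++ [x, b] := by
    apply List.take_of_length_le; simp [hC]
  have hlen : (a :: y :: (Cl ++ [x, b])).length = m + 4 := by simp [hC]
  unfold windows
  rw [hlen, show m + 4 + 1 - (m + 2) = 3 from by omega, show List.range 3 = [0, 1, 2] from by decide]
  simp only [List.map_cons, List.map_nil, List.drop_zero, List.drop_succ_cons]
  rw [t0, t1, t2]

/-- Two other edges meeting `e` in a `(k-1)`-set meet it in the SAME `(k-1)`-set. -/
lemma keyA {k : ℕ} {E : Finset (Finset V)} (hk : 2 ≤ k)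
    (huni : ∀ e ∈ E, e.card = k) (hlen : ChainsLenLE k 2 E) (hsf : SemicycleFree k E)
    {e f1 f2 : Finset V} (he : e ∈ E) (h1 : f1 ∈ E) (h2 : f2 ∈ E)
    (hne1 : f1 ≠ e) (hne2 : f2 ≠ e) (hne12 : f1 ≠ f2)
    (hc1 : (e ∩ f1).card = k - 1) (hc2 : (e ∩ f2).card = k - 1) :
    e ∩ f1 = e ∩ f2 := by
  by_contra hKK
  obtain ⟨m, rfl⟩ : ∃ m, k = m + 2 := ⟨k - 2, by omega⟩
  obtain ⟨K1, hK1⟩ : ∃ K, e ∩ f1 = K := ⟨_, rfl⟩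
  obtain ⟨K2, hK2⟩ : ∃ K, e ∩ f2 = K := ⟨_, rfl⟩
  rw [hK1] at hc1 hKK
  rw [hK2] at hc2 hKK
  have hce : e.card = m + 2 := huni e he
  have hcf1 : f1.card = m + 2 := huni f1 h1
  have hcf2 : f2.card = m + 2 := huni f2 h2
  have hc1' : K1.card = m + 1 := by omega
  have hc2' : K2.card = m + 1 := by omega
  have hK1e : K1 ⊆ e := hK1 ▸ Finset.inter_subset_left
  have hK2e : K2 ⊆ e := hK2 ▸ Finset.inter_subset_left
  have hK1f : K1 ⊆ f1 := hK1 ▸ Finset.inter_subset_right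
  have hK2f : K2 ⊆ f2 := hK2 ▸ Finset.inter_subset_right
  have hKicard : (K1 ∩ K2).card ≤ m := by
    by_contra h
    push_neg at h
    have h1' : K1 ∩ K2 = K1 :=
      Finset.eq_of_subset_of_card_le Finset.inter_subset_left (by omega)
    have h2' : K1 ⊆ K2 := by rw [← h1']; exact Finset.inter_subset_right
    exact hKK (Finset.eq_of_subset_of_card_le h2' (by omega))
  have hiden := Finset.card_union_add_card_inter K1 K2
  have hunion : K1 ∪ K2 ⊆ e := Finset.union_subset hK1e hK2e
  have huc : (K1 ∪ K2).card ≤ m + 2 := by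
    have := Finset.card_le_card hunion; omega
  have hue : K1 ∪ K2 = e := Finset.eq_of_subset_of_card_le hunion (by omega)
  have hKim : (K1 ∩ K2).card = m := by omega
  -- x, y
  have hxcard : (K2 \ K1).card = 1 := by
    have := Finset.card_inter_add_card_sdiff K2 K1
    rw [Finset.inter_comm] at this
    omega
  have hycard : (K1 \ K2).card = 1 := by
    have := Finset.card_inter_add_card_sdiff K1 K2
    omega
  obtain ⟨x, hx⟩ := Finset.card_eq_one.mp hxcard
  obtain ⟨y, hy⟩ := Finset.card_eq_one.mp hycard
  have hxK2 : x ∈ K2 := (Finset.mem_sdiff.mp (hx ▸ Finset.mem_singleton_self x)).1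
  have hxK1 : x ∉ K1 := (Finset.mem_sdiff.mp (hx ▸ Finset.mem_singleton_self x)).2
  have hyK1 : y ∈ K1 := (Finset.mem_sdiff.mp (hy ▸ Finset.mem_singleton_self y)).1
  have hyK2 : y ∉ K2 := (Finset.mem_sdiff.mp (hy ▸ Finset.mem_singleton_self y)).2
  have hxKi : x ∉ K1 ∩ K2 := fun h => hxK1 (Finset.mem_of_mem_inter_left h)
  have hyKi : y ∉ K1 ∩ K2 := fun h => hyK2 (Finset.mem_of_mem_inter_right h)
  have hK1eq : insert y (K1 ∩ K2) = K1 := by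
    apply Finset.eq_of_subset_of_card_le
    · exact Finset.insert_subset hyK1 Finset.inter_subset_left
    · rw [Finset.card_insert_of_notMem hyKi]; omega
  have hK2eq : insert x (K1 ∩ K2) = K2 := by
    apply Finset.eq_of_subset_of_card_le
    · exact Finset.insert_subset hxK2 Finset.inter_subset_right
    · rw [Finset.card_insert_of_notMem hxKi]; omega
  have hyK2' : y ∉ K2 := hyK2
  have heeq : insert y K2 = e := by
    apply Finset.eq_of_subset_of_card_le
    · exact Finset.insert_subset (hK1e hyK1) hK2e
    · rw [Finset.card_insert_of_notMem hyK2']; omega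
  -- a, b
  have hacard : (f1 \ e).card = 1 := by
    have := Finset.card_inter_add_card_sdiff f1 e
    rw [Finset.inter_comm, hK1] at this
    omega
  have hbcard : (f2 \ e).card = 1 := by
    have := Finset.card_inter_add_card_sdiff f2 e
    rw [Finset.inter_comm, hK2] at this
    omega
  obtain ⟨a, ha⟩ := Finset.card_eq_one.mp hacard
  obtain ⟨b, hb⟩ := Finset.card_eq_one.mp hbcard
  have haf : a ∈ f1 := (Finset.mem_sdiff.mp (ha ▸ Finset.mem_singleton_self a)).1
  have hae : a ∉ e := (Finset.mem_sdiff.mp (ha ▸ Finset.mem_singleton_self a)).2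
  have hbf : b ∈ f2 := (Finset.mem_sdiff.mp (hb ▸ Finset.mem_singleton_self b)).1
  have hbe : b ∉ e := (Finset.mem_sdiff.mp (hb ▸ Finset.mem_singleton_self b)).2
  have haK1 : a ∉ K1 := fun h => hae (hK1e h)
  have hbK2 : b ∉ K2 := fun h => hbe (hK2e h)
  have hf1eq : insert a K1 = f1 := by
    apply Finset.eq_of_subset_of_card_le
    · exact Finset.insert_subset haf hK1f
    · rw [Finset.card_insert_of_notMem haK1]; omega
  have hf2eq : insert b K2 = f2 := by
    apply Finset.eq_of_subset_of_card_le
    · exact Finset.insert_subset hbf hK2f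
    · rw [Finset.card_insert_of_notMem hbK2]; omega
  -- build the list
  obtain ⟨Cl, hCl⟩ : ∃ L, (K1 ∩ K2).toList = L := ⟨_, rfl⟩
  have hClen : Cl.length = m := by rw [← hCl, Finset.length_toList, hKim]
  have hClF : Cl.toFinset = K1 ∩ K2 := by rw [← hCl, Finset.toList_toFinset]
  obtain ⟨w, hwdef⟩ : ∃ w', a :: y :: (Cl ++ [x, b]) = w' := ⟨_, rfl⟩
  have hwin := windows_explicit m a y x b Cl hClen
  have hT0 : (a :: y :: Cl).toFinset = f1 := by
    rw [List.toFinset_cons, List.toFinset_cons, hClF, hK1eq, hf1eq]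
  have hT1 : (y :: (Cl ++ [x])).toFinset = e := by
    rw [List.toFinset_cons, List.toFinset_append, hClF]
    simp only [List.toFinset_cons, List.toFinset_nil, Finset.insert_empty]
    rw [show K1 ∩ K2 ∪ {x} = insert x (K1 ∩ K2) by
      rw [Finset.union_comm]; rfl]
    rw [hK2eq, heeq]
  have hT2 : (Cl ++ [x, b]).toFinset = f2 := by
    have hf2' : f2 = insert b (insert x (K1 ∩ K2)) := by rw [hK2eq, hf2eq]
    rw [List.toFinset_append, hClF, hf2']
    ext v
    simp only [Finset.mem_union, List.toFinset_cons, List.toFinset_nil, Finset.insert_empty,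
      Finset.mem_insert, Finset.mem_singleton]
    tauto
  have hwin' : windows (m + 2) w = [f1, e, f2] := by
    rw [← hwdef, hwin, hT0, hT1, hT2]
  have hmemE : ∀ s ∈ windows (m + 2) w, s ∈ E := by
    rw [hwin']
    intro s hs
    simp only [List.mem_cons, List.not_mem_nil, or_false] at hs
    rcases hs with rfl | rfl | rfl <;> assumption
  have hcards : ∀ s ∈ windows (m + 2) w, s.card = m + 2 := by
    rw [hwin']
    intro s hs
    simp only [List.mem_cons, List.not_mem_nil, or_false] at hs
    rcases hs with rfl | rfl | rfl <;> assumption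
  have hnodup : (windows (m + 2) w).Nodup := by
    rw [hwin']
    simp [List.nodup_cons, hne1, hne12, hne2.symm]
  have hwlen : w.length = m + 4 := by rw [← hwdef]; simp [hClen]
  have hhead : w.head? = some a := by rw [← hwdef]; rfl
  have hlast : w.getLast? = some b := by
    have : w = (a :: y :: (Cl ++ [x])) ++ [b] := by rw [← hwdef]; simp
    rw [this, List.getLast?_concat]
  by_cases hab : a = b
  · exact hsf ⟨w, ⟨by omega, by rw [hhead, hlast, hab], hcards, hnodup⟩, hmemE⟩
  · have := hlen w ⟨by omega, by rw [hhead, hlast]; simpa using hab, hcards, hnodup⟩ hmemE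
    omega
/-- The class (maximal star) of an edge. -/
def cls (k : ℕ) (E : Finset (Finset V)) (e : Finset V) : Finset (Finset V) :=
  E.filter (fun f => e = f ∨ (e ∩ f).card = k - 1)

section
variable {k : ℕ} {E : Finset (Finset V)}

lemma inter_card_le (huni : ∀ e ∈ E, e.card = k) {e f : Finset V}
    (he : e ∈ E) (hf : f ∈ E) (hne : e ≠ f) : (e ∩ f).card ≤ k - 1 := by
  have h1 : e ∩ f ⊆ e := Finset.inter_subset_left
  have h2 : e ∩ f ≠ e := by
    intro h
    have : e ⊆ f := by rw [← h]; exact Finset.inter_subset_right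
    exact hne (Finset.eq_of_subset_of_card_le this (by rw [huni e he, huni f hf]))
  have := Finset.card_lt_card (Finset.ssubset_iff_subset_ne.mpr ⟨h1, h2⟩)
  rw [huni e he] at this
  omega

lemma inter_eq_of_kernel (huni : ∀ e ∈ E, e.card = k) {e f K : Finset V}
    (he : e ∈ E) (hf : f ∈ E) (hne : e ≠ f) (hKc : K.card = k - 1)
    (hK1 : K ⊆ e) (hK2 : K ⊆ f) : e ∩ f = K ∧ (e ∩ f).card = k - 1 := by
  have hsub : K ⊆ e ∩ f := Finset.subset_inter hK1 hK2
  have hle := inter_card_le huni he hf hne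
  have : e ∩ f = K := (Finset.eq_of_subset_of_card_le hsub (by omega)).symm
  exact ⟨this, by rw [this, hKc]⟩

lemma mem_cls_self {e : Finset V} (he : e ∈ E) : e ∈ cls k E e :=
  Finset.mem_filter.mpr ⟨he, Or.inl rfl⟩

lemma cls_subset_E {e : Finset V} : cls k E e ⊆ E := Finset.filter_subset _ _

lemma mem_cls_symm {e f : Finset V} (he : e ∈ E) (hf : f ∈ cls k E e) :
    e ∈ cls k E f := by
  obtain ⟨hfE, h⟩ := Finset.mem_filter.mp hf
  refine Finset.mem_filter.mpr ⟨he, ?_⟩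
  rcases h with h | h
  · exact Or.inl h.symm
  · exact Or.inr (by rw [Finset.inter_comm]; exact h)

variable (hk : 2 ≤ k) (huni : ∀ e ∈ E, e.card = k)
  (hlen : ChainsLenLE k 2 E) (hsf : SemicycleFree k E)

include hk huni hlen hsf

lemma cls_subset_of_mem {e f : Finset V} (he : e ∈ E) (hf : f ∈ cls k E e) :
    cls k E f ⊆ cls k E e := by
  obtain ⟨hfE, hrel⟩ := Finset.mem_filter.mp hf
  intro g hg
  obtain ⟨hgE, hrel2⟩ := Finset.mem_filter.mp hg
  rcases hrel with rfl | hef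
  · exact hg
  rcases hrel2 with rfl | hfg
  · exact hf
  by_cases heg : e = g
  · exact heg ▸ mem_cls_self he
  by_cases hfe : f = e
  · exact hfe ▸ hg
  by_cases hfg' : f = g
  · exact hfg' ▸ hf
  -- apply keyA at center f
  have h1 : (f ∩ e).card = k - 1 := by rw [Finset.inter_comm]; exact hef
  have hKA := keyA hk huni hlen hsf hfE he hgE (fun h => hfe h.symm) (fun h => hfg' h.symm)
    (fun h => heg h) h1 hfg
  -- f ∩ e = f ∩ g, so f ∩ e ⊆ e ∩ g
  have hsub : f ∩ e ⊆ e ∩ g := by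
    intro v hv
    have hv2 : v ∈ f ∩ g := hKA ▸ hv
    exact Finset.mem_inter.mpr ⟨(Finset.mem_inter.mp hv).2, (Finset.mem_inter.mp hv2).2⟩
  have hge : (e ∩ g).card = k - 1 := by
    have hle := inter_card_le huni he hgE heg
    have := Finset.card_le_card hsub
    rw [h1] at this
    omega
  exact Finset.mem_filter.mpr ⟨hgE, Or.inr hge⟩

lemma cls_eq_of_mem {e f : Finset V} (he : e ∈ E) (hf : f ∈ cls k E e) :
    cls k E f = cls k E e := by
  have hfE : f ∈ E := cls_subset_E hf
  exact Finset.Subset.antisymm (cls_subset_of_mem hk huni hlen hsf he hf)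
    (cls_subset_of_mem hk huni hlen hsf hfE (mem_cls_symm he hf))

lemma cls_kernel {e : Finset V} (he : e ∈ E) :
    ∃ K : Finset V, K.card = k - 1 ∧ ∀ g ∈ cls k E e, K ⊆ g := by
  by_cases h : ∃ f ∈ cls k E e, f ≠ e
  · obtain ⟨f, hf, hfe⟩ := h
    obtain ⟨hfE, hrel⟩ := Finset.mem_filter.mp hf
    have hef : (e ∩ f).card = k - 1 := by
      rcases hrel with h' | h'
      · exact absurd h'.symm hfe
      · exact h'
    refine ⟨e ∩ f, hef, fun g hg => ?_⟩
    obtain ⟨hgE, hrel2⟩ := Finset.mem_filter.mp hg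
    by_cases hge : g = e
    · exact hge ▸ Finset.inter_subset_left
    by_cases hgf : g = f
    · exact hgf ▸ Finset.inter_subset_right
    have heg : (e ∩ g).card = k - 1 := by
      rcases hrel2 with h' | h'
      · exact absurd h'.symm hge
      · exact h'
    have := keyA hk huni hlen hsf he hfE hgE hfe hge (fun h' => hgf h'.symm) hef heg
    rw [this]
    exact Finset.inter_subset_right
  · push_neg at h
    obtain ⟨K, hKsub, hKc⟩ := Finset.exists_subset_card_eq
      (show k - 1 ≤ e.card by rw [huni e he]; omega)
    exact ⟨K, hKc, fun g hg => (h g hg) ▸ hKsub⟩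

lemma isMaxStar_cls {e : Finset V} (he : e ∈ E) : IsMaxStar k E (cls k E e) := by
  obtain ⟨K, hKc, hK⟩ := cls_kernel hk huni hlen hsf he
  refine ⟨⟨cls_subset_E, ⟨e, mem_cls_self he⟩, K, hKc, hK⟩, ?_⟩
  intro T hT hsub
  obtain ⟨hTE, hTne, KT, hKTc, hKT⟩ := hT
  refine Finset.Subset.antisymm hsub (fun g hg => ?_)
  have hgE : g ∈ E := hTE hg
  by_cases hge : g = e
  · rw [hge]; exact mem_cls_self he
  have hKTe : KT ⊆ e := hKT e (hsub (mem_cls_self he))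
  have hKTg : KT ⊆ g := hKT g hg
  have := inter_eq_of_kernel huni he hgE (fun h => hge h.symm) hKTc hKTe hKTg
  exact Finset.mem_filter.mpr ⟨hgE, Or.inr this.2⟩

lemma isMaxStar_iff {S : Finset (Finset V)} :
    IsMaxStar k E S ↔ ∃ e ∈ E, S = cls k E e := by
  constructor
  · rintro ⟨⟨hSE, ⟨e, heS⟩, K, hKc, hK⟩, hmax⟩
    have heE : e ∈ E := hSE heS
    refine ⟨e, heE, hmax _ (isMaxStar_cls hk huni hlen hsf heE).1 (fun g hg => ?_)⟩
    have hgE : g ∈ E := hSE hg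
    by_cases hge : g = e
    · rw [hge]; exact mem_cls_self heE
    have := inter_eq_of_kernel huni heE hgE (fun h => hge h.symm) hKc (hK e heS) (hK g hg)
    exact Finset.mem_filter.mpr ⟨hgE, Or.inr this.2⟩
  · rintro ⟨e, he, rfl⟩
    exact isMaxStar_cls hk huni hlen hsf he

lemma filter_supset_eq_cls {s : Finset V} (hsc : s.card = k - 1) {e f : Finset V}
    (he : e ∈ E) (hf : f ∈ E) (hef : e ≠ f) (hse : s ⊆ e) (hsf' : s ⊆ f) :
    E.filter (fun g => s ⊆ g) = cls k E e := by
  obtain ⟨hefs, hefc⟩ := inter_eq_of_kernel huni he hf hef hsc hse hsf'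
  apply Finset.Subset.antisymm
  · intro g hg
    obtain ⟨hgE, hsg⟩ := Finset.mem_filter.mp hg
    by_cases hge : g = e
    · rw [hge]; exact mem_cls_self he
    have := inter_eq_of_kernel huni he hgE (fun h => hge h.symm) hsc hse hsg
    exact Finset.mem_filter.mpr ⟨hgE, Or.inr this.2⟩
  · intro g hg
    obtain ⟨hgE, hrel⟩ := Finset.mem_filter.mp hg
    refine Finset.mem_filter.mpr ⟨hgE, ?_⟩
    rcases hrel with rfl | heg
    · exact hse
    by_cases hge : g = e
    · exact hge ▸ hse
    by_cases hgf : g = f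
    · exact hgf ▸ hsf'
    have := keyA hk huni hlen hsf he hf hgE (fun h => hef h.symm) hge (fun h => hgf h.symm) hefc heg
    rw [hefs] at this
    rw [this]
    exact Finset.inter_subset_right

end

section Counting
variable [Fintype V] {k : ℕ} {E : Finset (Finset V)}

variable (hk : 2 ≤ k) (huni : ∀ e ∈ E, e.card = k)
  (hlen : ChainsLenLE k 2 E) (hsf : SemicycleFree k E)

include hk huni hlen hsf

lemma stars_fiber {e : Finset V} (he : e ∈ E) :
    E.filter (fun f => cls k E f = cls k E e) = cls k E e := by
  apply Finset.Subset.antisymm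
  · intro f hf
    obtain ⟨hfE, hcf⟩ := Finset.mem_filter.mp hf
    exact hcf ▸ mem_cls_self hfE
  · intro f hf
    exact Finset.mem_filter.mpr ⟨cls_subset_E hf, cls_eq_of_mem hk huni hlen hsf he hf⟩

lemma sum_stars_card : ∑ S ∈ E.image (cls k E), S.card = E.card := by
  rw [Finset.card_eq_sum_card_fiberwise (f := cls k E) (t := E.image (cls k E))
    (fun e he => Finset.mem_image_of_mem _ he)]
  apply Finset.sum_congr rfl
  intro S hS
  obtain ⟨e, he, rfl⟩ := Finset.mem_image.mp hS
  rw [stars_fiber hk huni hlen hsf he]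

lemma cls_card_le {e : Finset V} (he : e ∈ E) :
    (cls k E e).card ≤ Fintype.card V - (k - 1) := by
  obtain ⟨K, hKc, hK⟩ := cls_kernel hk huni hlen hsf he
  have hinj : (cls k E e).card ≤ (Finset.powersetCard 1 (Finset.univ \ K)).card := by
    apply Finset.card_le_card_of_injOn (fun g => g \ K)
    · intro g hg
      simp only [Finset.mem_coe, Finset.mem_powersetCard]
      constructor
      · intro v hv
        rw [Finset.mem_sdiff] at hv ⊢
        exact ⟨Finset.mem_univ v, hv.2⟩
      · rw [Finset.card_sdiff_of_subset (hK g hg), hKc, huni g (cls_subset_E hg)]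
        omega
    · intro g1 hg1 g2 hg2 h
      have e1 : g1 \ K ∪ K = g1 := Finset.sdiff_union_of_subset (hK g1 hg1)
      have e2 : g2 \ K ∪ K = g2 := Finset.sdiff_union_of_subset (hK g2 hg2)
      rw [← e1, ← e2]
      exact congrArg (· ∪ K) h
  rw [Finset.card_powersetCard, Finset.card_sdiff_of_subset (Finset.subset_univ K), hKc,
    Finset.card_univ, Nat.choose_one_right] at hinj
  exact hinj

omit hk huni hlen hsf in
lemma k_le_n (huni : ∀ e ∈ E, e.card = k) {e : Finset V} (he : e ∈ E) :
    k ≤ Fintype.card V := by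
  rw [← huni e he, ← Finset.card_univ]
  exact Finset.card_le_univ e

omit hlen hsf in
lemma count1 :
    k * E.card = ∑ s ∈ Finset.powersetCard (k - 1) (Finset.univ : Finset V),
      (E.filter (fun g => s ⊆ g)).card := by
  have swap : ∀ g ∈ E,
      ((Finset.powersetCard (k - 1) (Finset.univ : Finset V)).filter (fun s => s ⊆ g)).card
        = k := by
    intro g hg
    have : (Finset.powersetCard (k - 1) (Finset.univ : Finset V)).filter (fun s => s ⊆ g)
        = Finset.powersetCard (k - 1) g := by
      ext s
      simp only [Finset.mem_filter, Finset.mem_powersetCard, Finset.subset_univ, true_and]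
      tauto
    rw [this, Finset.card_powersetCard, huni g hg]
    rw [← Nat.choose_symm (by omega : k - 1 ≤ k), show k - (k - 1) = 1 by omega,
      Nat.choose_one_right]
  calc k * E.card = ∑ g ∈ E, ((Finset.powersetCard (k - 1)
        (Finset.univ : Finset V)).filter (fun s => s ⊆ g)).card := by
        rw [Finset.sum_congr rfl swap, Finset.sum_const, smul_eq_mul, mul_comm]
    _ = ∑ g ∈ E, ∑ s ∈ Finset.powersetCard (k - 1) (Finset.univ : Finset V),
          if s ⊆ g then 1 else 0 := by
        apply Finset.sum_congr rfl
        intro g _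
        rw [Finset.card_filter]
    _ = ∑ s ∈ Finset.powersetCard (k - 1) (Finset.univ : Finset V),
          ∑ g ∈ E, if s ⊆ g then 1 else 0 := Finset.sum_comm
    _ = _ := by
        apply Finset.sum_congr rfl
        intro s _
        rw [Finset.card_filter]

end Counting

section Counting2
set_option linter.unusedSectionVars false
variable [Fintype V] {k : ℕ} {E : Finset (Finset V)}
variable (hk : 2 ≤ k) (huni : ∀ e ∈ E, e.card = k)
  (hlen : ChainsLenLE k 2 E) (hsf : SemicycleFree k E)
include hk huni hlen hsf

lemma count2 :
    ∑ s ∈ Finset.powersetCard (k - 1) (Finset.univ : Finset V),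
      (E.filter (fun g => s ⊆ g)).card
    = ∑ s ∈ (Finset.powersetCard (k - 1) (Finset.univ : Finset V)).filter
        (fun s => ∃ g ∈ E, s ⊆ g), (E.filter (fun g => s ⊆ g)).card := by
  rw [Finset.sum_filter_of_ne]
  intro s _ hne
  by_contra h
  push_neg at h
  apply hne
  rw [Finset.card_eq_zero, Finset.filter_eq_empty_iff]
  exact h

lemma count3 :
    ∑ s ∈ (Finset.powersetCard (k - 1) (Finset.univ : Finset V)).filter
        (fun s => ∃ g ∈ E, s ⊆ g), (E.filter (fun g => s ⊆ g)).card
    = (∑ s ∈ (Finset.powersetCard (k - 1) (Finset.univ : Finset V)).filter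
        (fun s => ∃ g ∈ E, s ⊆ g), ((E.filter (fun g => s ⊆ g)).card - 1))
      + ((Finset.powersetCard (k - 1) (Finset.univ : Finset V)).filter
        (fun s => ∃ g ∈ E, s ⊆ g)).card := by
  rw [Finset.card_eq_sum_ones, ← Finset.sum_add_distrib]
  apply Finset.sum_congr rfl
  intro s hs
  obtain ⟨_, g, hgE, hsg⟩ := Finset.mem_filter.mp hs
  have : 0 < (E.filter (fun g => s ⊆ g)).card :=
    Finset.card_pos.mpr ⟨g, Finset.mem_filter.mpr ⟨hgE, hsg⟩⟩
  omega

lemma count4 :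
    ∑ s ∈ (Finset.powersetCard (k - 1) (Finset.univ : Finset V)).filter
        (fun s => ∃ g ∈ E, s ⊆ g), ((E.filter (fun g => s ⊆ g)).card - 1)
    = ∑ S ∈ E.image (cls k E), (S.card - 1) := by
  -- restrict both sides to the parts with at least 2 elements
  have e1 : ∑ s ∈ ((Finset.powersetCard (k - 1) (Finset.univ : Finset V)).filter
        (fun s => ∃ g ∈ E, s ⊆ g)).filter (fun s => 2 ≤ (E.filter (fun g => s ⊆ g)).card),
        ((E.filter (fun g => s ⊆ g)).card - 1)
      = ∑ s ∈ (Finset.powersetCard (k - 1) (Finset.univ : Finset V)).filter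
        (fun s => ∃ g ∈ E, s ⊆ g), ((E.filter (fun g => s ⊆ g)).card - 1) :=
    Finset.sum_filter_of_ne (fun s _ hne => by omega)
  have e2 : ∑ S ∈ (E.image (cls k E)).filter (fun S => 2 ≤ S.card), (S.card - 1)
      = ∑ S ∈ E.image (cls k E), (S.card - 1) :=
    Finset.sum_filter_of_ne (fun S _ hne => by omega)
  rw [← e1, ← e2]
  apply Finset.sum_bij (i := fun s _ => E.filter (fun g => s ⊆ g))
  · -- maps into
    intro s hs
    rw [Finset.mem_filter] at hs
    obtain ⟨hs1, hd⟩ := hs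
    obtain ⟨hsP, g, hgE, hsg⟩ := Finset.mem_filter.mp hs1
    obtain ⟨hsu, hsc⟩ := Finset.mem_powersetCard.mp hsP
    obtain ⟨e, he, f, hf, hef⟩ := Finset.one_lt_card.mp (by omega :
      1 < (E.filter (fun g => s ⊆ g)).card)
    obtain ⟨heE, hse⟩ := Finset.mem_filter.mp he
    obtain ⟨hfE, hsf'⟩ := Finset.mem_filter.mp hf
    have heq := filter_supset_eq_cls hk huni hlen hsf hsc heE hfE hef hse hsf'
    rw [Finset.mem_filter, heq]
    exact ⟨Finset.mem_image_of_mem _ heE, by rw [← heq]; omega⟩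
  · -- injective
    intro s1 hs1 s2 hs2 heq
    rw [Finset.mem_filter] at hs1 hs2
    obtain ⟨hs1', hd1⟩ := hs1
    obtain ⟨hs2', hd2⟩ := hs2
    obtain ⟨hsP1, _⟩ := Finset.mem_filter.mp hs1'
    obtain ⟨hsP2, _⟩ := Finset.mem_filter.mp hs2'
    obtain ⟨_, hsc1⟩ := Finset.mem_powersetCard.mp hsP1
    obtain ⟨_, hsc2⟩ := Finset.mem_powersetCard.mp hsP2
    obtain ⟨e, he, f, hf, hef⟩ := Finset.one_lt_card.mp (by omega :
      1 < (E.filter (fun g => s1 ⊆ g)).card)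
    obtain ⟨heE, hse⟩ := Finset.mem_filter.mp he
    obtain ⟨hfE, hsf'⟩ := Finset.mem_filter.mp hf
    have h1 := (inter_eq_of_kernel huni heE hfE hef hsc1 hse hsf').1
    have he2 : e ∈ E.filter (fun g => s2 ⊆ g) := heq ▸ he
    have hf2 : f ∈ E.filter (fun g => s2 ⊆ g) := heq ▸ hf
    have h2 := (inter_eq_of_kernel huni heE hfE hef hsc2
      (Finset.mem_filter.mp he2).2 (Finset.mem_filter.mp hf2).2).1
    rw [← h1, ← h2]
  · -- surjective
    intro S hS
    rw [Finset.mem_filter] at hS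
    obtain ⟨hS1, hcard⟩ := hS
    obtain ⟨e, heE, rfl⟩ := Finset.mem_image.mp hS1
    obtain ⟨f, hf, hfe⟩ := Finset.exists_mem_ne (s := cls k E e) (by omega) e
    have hfE : f ∈ E := cls_subset_E hf
    have hef : (e ∩ f).card = k - 1 := by
      rcases (Finset.mem_filter.mp hf).2 with h' | h'
      · exact absurd h'.symm hfe
      · exact h'
    refine ⟨e ∩ f, ?_, ?_⟩
    · rw [Finset.mem_filter]
      have hEs : E.filter (fun g => e ∩ f ⊆ g) = cls k E e :=
        filter_supset_eq_cls hk huni hlen hsf hef heE hfE (fun h => hfe h.symm)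
          Finset.inter_subset_left Finset.inter_subset_right
      refine ⟨Finset.mem_filter.mpr ⟨Finset.mem_powersetCard.mpr
        ⟨Finset.subset_univ _, hef⟩, e, heE, Finset.inter_subset_left⟩, ?_⟩
      rw [hEs]
      omega
    · exact filter_supset_eq_cls hk huni hlen hsf hef heE hfE (fun h => hfe h.symm)
        Finset.inter_subset_left Finset.inter_subset_right
  · intro s _
    rfl

lemma count5 :
    (∑ S ∈ E.image (cls k E), (S.card - 1)) + (E.image (cls k E)).card = E.card := by
  rw [← sum_stars_card hk huni hlen hsf, Finset.card_eq_sum_ones, ← Finset.sum_add_distrib]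
  apply Finset.sum_congr rfl
  intro S hS
  obtain ⟨e, he, rfl⟩ := Finset.mem_image.mp hS
  have : 0 < (cls k E e).card := Finset.card_pos.mpr ⟨e, mem_cls_self he⟩
  omega

lemma main_nat :
    k * E.card + (E.image (cls k E)).card
      + ((Finset.powersetCard (k - 1) (Finset.univ : Finset V)).filter
          (fun s => ∀ g ∈ E, ¬ s ⊆ g)).card
    = E.card + (Fintype.card V).choose (k - 1) := by
  classical
  have hcompl :
      ((Finset.powersetCard (k - 1) (Finset.univ : Finset V)).filter
        (fun s => ∃ g ∈ E, s ⊆ g)).card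
      + ((Finset.powersetCard (k - 1) (Finset.univ : Finset V)).filter
          (fun s => ∀ g ∈ E, ¬ s ⊆ g)).card
      = (Fintype.card V).choose (k - 1) := by
    have : (Finset.powersetCard (k - 1) (Finset.univ : Finset V)).filter
        (fun s => ∀ g ∈ E, ¬ s ⊆ g)
        = (Finset.powersetCard (k - 1) (Finset.univ : Finset V)).filter
          (fun s => ¬ ∃ g ∈ E, s ⊆ g) := by
      apply Finset.filter_congr
      intro s _
      push_neg
      rfl
    rw [this, Finset.card_filter_add_card_filter_not, Finset.card_powersetCard,
      Finset.card_univ]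
  have h1 := count1 hk huni (E := E)
  have h2 := count2 hk huni hlen hsf
  have h3 := count3 hk huni hlen hsf
  have h4 := count4 hk huni hlen hsf
  have h5 := count5 hk huni hlen hsf
  omega

end Counting2

/-- Star-equation. -/
theorem stmt5 {V : Type*} [Fintype V] [DecidableEq V] (n k : ℕ) (hk : 2 ≤ k)
    (hn : Fintype.card V = n)
    (E : Finset (Finset V)) (hH : IsLHypertree k 2 E)
    (C : ℕ → ℕ)
    (hC : ∀ i, C i = Nat.card {S : Finset (Finset V) // IsMaxStar k E S ∧ S.card = i})
    (l : ℕ)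
    (hl : l = ((Finset.powersetCard (k - 1) (Finset.univ : Finset V)).filter
      (fun s => ∀ e ∈ E, ¬ s ⊆ e)).card) :
    (E.card : ℚ) = (1 / ((k : ℚ) - 1)) * (n.choose (k - 1)) -
      (1 / ((k : ℚ) - 1)) * (∑ i ∈ Finset.Icc 1 (n - k + 1), C i) -
      (l : ℚ) / ((k : ℚ) - 1) := by
  classical
  obtain ⟨⟨huni, _, hsf⟩, hlen⟩ := hH
  have hCfilt : ∀ i, C i = ((E.image (cls k E)).filter (fun S => S.card = i)).card := by
    intro i
    rw [hC i, Nat.card_eq_fintype_card, Fintype.card_subtype]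
    congr 1
    ext S
    simp only [Finset.mem_filter, Finset.mem_univ, true_and]
    constructor
    · rintro ⟨hms, hci⟩
      obtain ⟨e, he, rfl⟩ := (isMaxStar_iff hk huni hlen hsf).mp hms
      exact ⟨Finset.mem_image_of_mem _ he, hci⟩
    · rintro ⟨hmem, hci⟩
      obtain ⟨e, he, rfl⟩ := Finset.mem_image.mp hmem
      exact ⟨isMaxStar_cls hk huni hlen hsf he, hci⟩
  have hsum : ∑ i ∈ Finset.Icc 1 (n - k + 1), C i = (E.image (cls k E)).card := by
    rw [Finset.sum_congr rfl (fun i _ => hCfilt i)]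
    symm
    apply Finset.card_eq_sum_card_fiberwise (f := Finset.card)
    intro S hS
    obtain ⟨e, he, rfl⟩ := Finset.mem_image.mp hS
    have h1 : 0 < (cls k E e).card := Finset.card_pos.mpr ⟨e, mem_cls_self he⟩
    have h2 := cls_card_le hk huni hlen hsf he
    have h3 := k_le_n huni he
    rw [Finset.mem_coe, Finset.mem_Icc, hn] at *
    omega
  have hmain := main_nat hk huni hlen hsf
  rw [hn, ← hl] at hmain
  have hk1 : ((k : ℚ) - 1) ≠ 0 := by
    have : (2 : ℚ) ≤ (k : ℚ) := by exact_mod_cast hk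
    linarith
  rw [hsum]
  have hq : (k : ℚ) * E.card + (E.image (cls k E)).card + l
      = E.card + (n.choose (k - 1) : ℚ) := by exact_mod_cast hmain
  field_simp
  linarith
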